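/- Let C be a Krull-Schmidt category, let f : M → N and g : N → L be morphisms, and let N = ⊕_j N_j be a decomposition into indecomposable objects with inclusions i_j and projections p_j. If M is indecomposable and g∘f is a split injection, then there exists an index j such that g∘i_j is a split injection and p_j∘f is an isomorphism. -/
import Mathlib


open CategoryTheory CategoryTheory.Limits

/-- A (preadditive) category is Krull–Schmidt if every object is a finite direct sum of
objects having local endomorphism rings. -/
def IsKrullSchmidt (C : Type*) [Category C] [Preadditive C] [HasFiniteBiproducts C] : Prop :=
  ∀ X : C, ∃ (n : ℕ) (f : Fin n → C),
    Nonempty (X ≅ ⨁ f) ∧ ∀ j, IsLocalRing (End (f j))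

section KSlemmas

/-- Noncommutative version: in a local (semi)ring, if a sum of two elements is a unit then
one of them is a unit. -/
theorem KS.isUnit_or_isUnit_of_isUnit_add' {R : Type*} [Ring R] [IsLocalRing R]
    {a b : R} (h : IsUnit (a + b)) : IsUnit a ∨ IsUnit b := by
  obtain ⟨u, hu⟩ := h
  have h1 : a * ↑u⁻¹ + b * ↑u⁻¹ = 1 := by rw [← add_mul, ← hu, Units.mul_inv]
  rcases IsLocalRing.isUnit_or_isUnit_of_add_one h1 with h' | h'
  · left
    have : a = a * ↑u⁻¹ * u := by rw [mul_assoc, Units.inv_mul, mul_one]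
    rw [this]
    exact h'.mul u.isUnit
  · right
    have : b = b * ↑u⁻¹ * u := by rw [mul_assoc, Units.inv_mul, mul_one]
    rw [this]
    exact h'.mul u.isUnit

theorem KS.exists_isUnit_of_sum_eq_one {R : Type*} [Ring R] [IsLocalRing R]
    {J : Type} [Fintype J] (a : J → R) (h : ∑ j, a j = 1) : ∃ j, IsUnit (a j) := by
  classical
  have key : ∀ s : Finset J, IsUnit (∑ j ∈ s, a j) → ∃ j ∈ s, IsUnit (a j) := by
    intro s
    induction s using Finset.cons_induction with
    | empty => intro hu; simp at hu
    | cons j s hj ih =>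
      intro hu
      rw [Finset.sum_cons] at hu
      rcases KS.isUnit_or_isUnit_of_isUnit_add' hu with h' | h'
      · exact ⟨j, Finset.mem_cons_self j s, h'⟩
      · obtain ⟨k, hk, hk'⟩ := ih h'
        exact ⟨k, Finset.mem_cons_of_mem hk, hk'⟩
  obtain ⟨j, _, hj⟩ := key Finset.univ (h ▸ isUnit_one)
  exact ⟨j, hj⟩

universe v u

variable {C : Type u} [Category.{v} C] [Preadditive C] [HasFiniteBiproducts C]
  [HasBinaryBiproducts C]

/-- Split off one summand of a finite biproduct. -/
noncomputable def KS.splitOff {J : Type} [Fintype J] [DecidableEq J] (F : J → C) (j : J) :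
    (⨁ F) ≅ F j ⊞ ⨁ (fun k : {k : J // k ≠ j} => F k.1) where
  hom := biprod.lift (biproduct.π F j) (biproduct.lift fun k => biproduct.π F k.1)
  inv := biprod.desc (biproduct.ι F j) (biproduct.desc fun k => biproduct.ι F k.1)
  hom_inv_id := by
    rw [biprod.lift_desc, biproduct.lift_desc, ← biproduct.total,
      Fintype.sum_eq_add_sum_compl j]
    congr 1
    rw [Finset.sum_subtype ({j}ᶜ : Finset J) (p := fun k => k ≠ j) (fun x => by simp)
      (fun k => biproduct.π F k ≫ biproduct.ι F k)]
  inv_hom_id := by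
    apply biprod.hom_ext' <;> apply biprod.hom_ext <;> simp [biproduct.ι_π]
    · ext k
      simp [biproduct.ι_π_ne _ (Ne.symm k.2)]
    · ext k
      simp [biproduct.ι_π]
      intro h
      exact absurd h k.2
    · ext k l
      simp [biproduct.ι_π]
      by_cases h : l = k
      · subst h; simp
      · rw [dif_neg (fun hh => h (Subtype.ext hh)), dif_neg h]

theorem KS.isZero_biproduct {J : Type} [Fintype J] (F : J → C)
    (h : ∀ j, IsZero (F j)) : IsZero (⨁ F) := by
  rw [IsZero.iff_id_eq_zero, ← biproduct.total]
  apply Finset.sum_eq_zero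
  intro j _
  rw [← Category.comp_id (biproduct.π F j), Category.assoc, (h j).eq_of_src (𝟙 _) 0]
  simp

/-- If `X` is indecomposable and isomorphic to a finite biproduct, all but one summand
vanish. -/
theorem KS.exists_unique_nonzero {J : Type} [Fintype J] {F : J → C} {X : C}
    (hX : Indecomposable X) (e : X ≅ ⨁ F) : ∃ j, ∀ k, k ≠ j → IsZero (F k) := by
  classical
  by_cases hall : ∀ j, IsZero (F j)
  · exact absurd (((KS.isZero_biproduct F hall).of_iso e)) hX.1
  push_neg at hall
  obtain ⟨j, hj⟩ := hall
  refine ⟨j, fun k hk => ?_⟩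
  rcases hX.2 _ _ (e ≪≫ KS.splitOff F j) with h | h
  · exact absurd h hj
  · have hip := biproduct.ι_π (fun k : {k : J // k ≠ j} => F k.1) ⟨k, hk⟩ ⟨k, hk⟩
    rw [dif_pos rfl] at hip
    simp only [eqToHom_refl] at hip
    rw [IsZero.iff_id_eq_zero, ← hip,
      h.eq_of_tgt (biproduct.ι (fun k : {k : J // k ≠ j} => F k.1) ⟨k, hk⟩) 0, zero_comp]

/-- The biproduct with all but one summand zero is isomorphic to that summand. -/
noncomputable def KS.biproductIsoOfZero {J : Type} [Fintype J] (F : J → C) (j : J)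
    (h : ∀ k, k ≠ j → IsZero (F k)) : (⨁ F) ≅ F j where
  hom := biproduct.π F j
  inv := biproduct.ι F j
  hom_inv_id := by
    classical
    apply biproduct.hom_ext
    intro k
    by_cases hk : k = j
    · subst hk; simp
    · exact (h k hk).eq_of_tgt _ _
  inv_hom_id := by simp

/-- Conjugation by an isomorphism as a ring isomorphism of endomorphism rings. -/
def KS.endRingEquiv {X Y : C} (e : X ≅ Y) : End X ≃+* End Y where
  toFun f := e.inv ≫ f ≫ e.hom
  invFun f := e.hom ≫ f ≫ e.inv
  left_inv f := by simp [End.mul_def]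
  right_inv f := by simp
  map_mul' f g := by simp [End.mul_def]
  map_add' f g := by
    exact (congrArg (fun t => e.inv ≫ t) (Preadditive.add_comp _ _ _ f g e.hom)).trans
      (Preadditive.comp_add _ _ _ e.inv (f ≫ e.hom) (g ≫ e.hom))

theorem KS.isLocalRing_of_iso {X Y : C} (e : X ≅ Y) (h : IsLocalRing (End X)) :
    IsLocalRing (End Y) := by
  haveI := h
  let φ := KS.endRingEquiv e
  haveI : Nontrivial (End Y) := φ.toEquiv.symm.nontrivial
  constructor
  intro a b hab
  have hu : IsUnit (φ.symm a + φ.symm b) := by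
    rw [← map_add, hab, map_one]
    exact isUnit_one
  rcases KS.isUnit_or_isUnit_of_isUnit_add' hu with h' | h'
  · exact Or.inl (by simpa using h'.map φ.toRingHom)
  · exact Or.inr (by simpa using h'.map φ.toRingHom)

/-- In a Krull–Schmidt category, the endomorphism ring of an indecomposable is local. -/
theorem KS.isLocalRing_end (hKS : IsKrullSchmidt C) {X : C} (hX : Indecomposable X) :
    IsLocalRing (End X) := by
  obtain ⟨n, F, ⟨e⟩, hloc⟩ := hKS X
  obtain ⟨j, hj⟩ := KS.exists_unique_nonzero hX e
  exact KS.isLocalRing_of_iso (e ≪≫ KS.biproductIsoOfZero F j hj).symm (hloc j)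

end KSlemmas

/-- In a Krull–Schmidt category, if `f : M ⟶ N`, `g : N ⟶ L`,
`N = ⊕_j N_j` with all `N_j` indecomposable, `M` is indecomposable and `g ∘ f` is a split
injection, then for some `j` the composite `g ∘ i_j` is a split injection and `p_j ∘ f` is
an isomorphism. -/
theorem krullSchmidt_split_mono_through_biproduct
    {C : Type*} [Category C] [Preadditive C] [HasFiniteBiproducts C] [HasBinaryBiproducts C]
    (hKS : IsKrullSchmidt C)
    {J : Type} [Fintype J] (N : J → C) (hN : ∀ j, Indecomposable (N j))
    {M L : C} (f : M ⟶ ⨁ N) (g : ⨁ N ⟶ L)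
    (hM : Indecomposable M) (hgf : IsSplitMono (f ≫ g)) :
    ∃ j : J, IsSplitMono (biproduct.ι N j ≫ g) ∧ IsIso (f ≫ biproduct.π N j) := by
  classical
  set ρ : L ⟶ M := retraction (f ≫ g) with hρ
  set h : (⨁ N) ⟶ M := g ≫ ρ with hh
  have hfh : f ≫ h = 𝟙 M := by
    rw [hh, ← Category.assoc]
    exact IsSplitMono.id (f ≫ g)
  have hsum : ∑ j, (f ≫ biproduct.π N j ≫ biproduct.ι N j ≫ h) = 𝟙 M := by
    have heach : ∀ j : J, f ≫ biproduct.π N j ≫ biproduct.ι N j ≫ h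
        = f ≫ ((biproduct.π N j ≫ biproduct.ι N j) ≫ h) := by intro j; simp
    rw [Finset.sum_congr rfl (fun j _ => heach j), ← Preadditive.comp_sum,
      ← Preadditive.sum_comp, biproduct.total, Category.id_comp, hfh]
  haveI hlocM : IsLocalRing (End M) := KS.isLocalRing_end hKS hM
  have hsum' : (∑ jj : J, (f ≫ biproduct.π N jj ≫ biproduct.ι N jj ≫ h : End M)) =
      (1 : End M) := hsum
  obtain ⟨j, hj⟩ := KS.exists_isUnit_of_sum_eq_one (R := End M)
    (fun jj => (f ≫ biproduct.π N jj ≫ biproduct.ι N jj ≫ h : End M)) hsum'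
  rw [isUnit_iff_isIso] at hj
  set a : M ⟶ N j := f ≫ biproduct.π N j with ha
  set b : N j ⟶ M := biproduct.ι N j ≫ h with hb
  have hw : f ≫ biproduct.π N j ≫ biproduct.ι N j ≫ h = a ≫ b := by
    rw [ha, hb]; simp
  rw [hw] at hj
  -- hj : IsIso (a ≫ b)
  set c : N j ⟶ M := b ≫ inv (a ≫ b) with hc
  have hac : a ≫ c = 𝟙 M := by
    rw [hc, ← Category.assoc]
    exact IsIso.hom_inv_id (a ≫ b)
  set e' : End (N j) := c ≫ a with he'
  have hee : e' ≫ e' = e' := by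
    rw [he']
    calc (c ≫ a) ≫ c ≫ a = c ≫ (a ≫ c) ≫ a := by simp
    _ = c ≫ a := by rw [hac]; simp
  have hmul : e' * e' = e' := by rw [End.mul_def]; exact hee
  haveI hlocN : IsLocalRing (End (N j)) := KS.isLocalRing_end hKS (hN j)
  have hsplit : e' + (1 - e') = 1 := by abel
  have hone : e' = 1 := by
    rcases IsLocalRing.isUnit_or_isUnit_of_add_one hsplit with hu | hu
    · exact hu.mul_left_cancel (by rw [hmul, mul_one])
    · exfalso
      have h2 : (1 - e') * (1 - e') = (1 - e') * 1 := by
        calc (1 - e') * (1 - e') = 1 - e' - e' + e' * e' := by noncomm_ring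
        _ = (1 - e') * 1 := by rw [hmul]; noncomm_ring
      have h3 : (1 : End (N j)) - e' = 1 := hu.mul_left_cancel h2
      have h4 : e' = 0 := by rwa [sub_eq_self] at h3
      have ha0 : a = 0 := by
        have : a ≫ e' = a := by rw [he', ← Category.assoc, hac, Category.id_comp]
        rw [← this, h4, Limits.comp_zero]
      apply hM.1
      rw [IsZero.iff_id_eq_zero, ← hac, ha0, Limits.zero_comp]
  have hca : c ≫ a = 𝟙 (N j) := hone
  haveI hia : IsIso a := ⟨c, hac, hca⟩
  have hbiso : IsIso b := by
    have : b = inv a ≫ (a ≫ b) := by simp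
    rw [this]
    infer_instance
  refine ⟨j, ⟨⟨⟨ρ ≫ inv b, ?_⟩⟩⟩, by rw [← ha]; exact hia⟩
  have hbb : (biproduct.ι N j ≫ g) ≫ ρ = b := by rw [hb, hh]; simp
  rw [← Category.assoc, hbb, IsIso.hom_inv_id]
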